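/- arXiv:1308.0790 — 2 statements merged into one kernel-verified Lean document; each statement's English description precedes it below -/
import Mathlib

section
/- Let ι be a finite type, π a permutation of ι, and a : ι → ℚ a function with |a(i)| ≥ 2 for all i. If z : ι → ℚ satisfies z(i) = a(i) * z(π(i)) for all i ∈ ι, then z(i) = 0 for all i. -/
theorem stmt_1 {ι : Type*} [Fintype ι] (π : Equiv.Perm ι) (a : ι → ℚ)
    (ha : ∀ i, 2 ≤ |a i|) (z : ι → ℚ)
    (hz : ∀ i, z i = a i * z (π i)) :
    ∀ i, z i = 0 := by
  intro i
  obtain ⟨m, -, hm⟩ := Finset.exists_max_image Finset.univ (fun j => |z j|)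
    ⟨i, Finset.mem_univ i⟩
  have hm' : ∀ j, |z j| ≤ |z m| := fun j => hm j (Finset.mem_univ j)
  set j := π⁻¹ m with hj
  have hpj : π j = m := π.apply_symm_apply m
  have h1 : |z j| = |a j| * |z m| := by rw [hz j, abs_mul, hpj]
  have h2 : 2 * |z m| ≤ |z j| := by
    rw [h1]; exact mul_le_mul_of_nonneg_right (ha j) (abs_nonneg _)
  have hzm : |z m| ≤ 0 := by nlinarith [hm' j]
  have : |z i| ≤ 0 := le_trans (hm' i) hzm
  exact abs_nonpos_iff.mp this
end

section
/- Let H and Δ be groups, r : Δ → Aut(H) an action, Γ a subgroup of H such that r(δ)(Γ) ⊆ Γ for all δ ∈ Δ, and φ : Γ → Δ a group homomorphism satisfying: (i) φ(r(δ)(γ)) = δ φ(γ) δ⁻¹ for all δ ∈ Δ, γ ∈ Γ (Δ-equivariance), and (ii) r(φ(γ))(h) = γ h γ⁻¹ for all γ ∈ Γ, h ∈ H. Then the image of the injective homomorphism ψ : Γ → H ⋊_r Δ, ψ(γ) = (γ⁻¹, φ(γ)), is a normal subgroup of H ⋊_r Δ. -/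
theorem stmt_9 {H Δ : Type*} [Group H] [Group Δ] (r : Δ →* MulAut H)
    (Γ : Subgroup H) (φ : Γ →* Δ)
    (hstab : ∀ (δ : Δ) (γ : Γ), r δ (γ : H) ∈ Γ)
    (hequiv : ∀ (δ : Δ) (γ : Γ), φ ⟨r δ (γ : H), hstab δ γ⟩ = δ * φ γ * δ⁻¹)
    (hφ : ∀ (γ : Γ) (h : H), r (φ γ) h = (γ : H) * h * (γ : H)⁻¹)
    (ψ : Γ →* SemidirectProduct H Δ r)
    (hψ : ∀ γ : Γ, ψ γ = ⟨(γ : H)⁻¹, φ γ⟩) :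
    ψ.range.Normal := by
  constructor
  rintro n ⟨γ, rfl⟩ g
  refine ⟨⟨r g.right (γ : H), hstab g.right γ⟩, ?_⟩
  rw [hψ, hψ, hequiv]
  ext
  · simp only [SemidirectProduct.mul_left, SemidirectProduct.inv_left,
      SemidirectProduct.mul_right, SemidirectProduct.inv_right, map_mul, map_inv,
      MulAut.mul_apply]
    rw [hφ]
    simp [mul_assoc]
  · simp [mul_assoc]
end
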